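/- The volume of a solid torus in ℝ³ obtained as the tube of radius 1 around a unit circle (i.e., the set of points at distance at most 1 from a circle of radius 1) equals 2π². -/

import Mathlib

open MeasureTheory Real

/-- The unit circle in the `z = 0` plane of `ℝ³`. -/
def unitCircle3 : Set (EuclideanSpace ℝ (Fin 3)) :=
  {p | (p 0) ^ 2 + (p 1) ^ 2 = 1 ∧ p 2 = 0}

lemma infDist_unitCircle3 (p : EuclideanSpace ℝ (Fin 3)) :
    Metric.infDist p unitCircle3 =
      Real.sqrt ((Real.sqrt ((p 0) ^ 2 + (p 1) ^ 2) - 1) ^ 2 + (p 2) ^ 2) := by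
  set x := p 0
  set y := p 1
  set z := p 2
  set s := Real.sqrt (x ^ 2 + y ^ 2) with hs_def
  have hs0 : 0 ≤ s := Real.sqrt_nonneg _
  have hs2 : s ^ 2 = x ^ 2 + y ^ 2 := Real.sq_sqrt (by positivity)
  have hne : unitCircle3.Nonempty := ⟨(WithLp.toLp 2 ![1, 0, 0] : EuclideanSpace ℝ (Fin 3)), by
    constructor <;> norm_num [unitCircle3, Matrix.cons_val_two]⟩
  have key : ∀ q ∈ unitCircle3, Real.sqrt ((s - 1) ^ 2 + z ^ 2) ≤ dist p q := by
    intro q hq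
    obtain ⟨hq1, hq2⟩ := hq
    rw [EuclideanSpace.dist_eq]
    apply Real.sqrt_le_sqrt
    rw [Fin.sum_univ_three, hq2, Real.dist_eq, Real.dist_eq, Real.dist_eq, sq_abs, sq_abs, sq_abs]
    have hcs : q 0 * x + q 1 * y ≤ s := by
      nlinarith [sq_nonneg (q 0 * y - q 1 * x), sq_nonneg (s + (q 0 * x + q 1 * y)),
        sq_nonneg (s - (q 0 * x + q 1 * y))]
    nlinarith [hcs, hs2]
  refine le_antisymm ?_ ?_
  · -- upper bound: pick the nearest point on the circle
    rcases eq_or_lt_of_le hs0 with hs | hs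
    · -- s = 0, so x = y = 0
      have hxy : x ^ 2 + y ^ 2 = 0 := by
        have h0 : Real.sqrt (x ^ 2 + y ^ 2) = 0 := hs.symm
        nlinarith [hs2]
      have hx : x = 0 := by nlinarith [sq_nonneg x, sq_nonneg y]
      have hy : y = 0 := by nlinarith [sq_nonneg x, sq_nonneg y]
      have hmem : (WithLp.toLp 2 ![1, 0, 0] : EuclideanSpace ℝ (Fin 3)) ∈ unitCircle3 := by
        constructor <;> norm_num [Matrix.cons_val_two]
      calc Metric.infDist p unitCircle3 ≤ dist p (WithLp.toLp 2 ![1, 0, 0] : EuclideanSpace ℝ (Fin 3)) :=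
            Metric.infDist_le_dist_of_mem hmem
        _ = Real.sqrt ((s - 1) ^ 2 + z ^ 2) := by
            rw [EuclideanSpace.dist_eq]
            congr 1
            rw [Fin.sum_univ_three]
            simp only [Real.dist_eq, sq_abs]
            show (x - ![(1:ℝ),0,0] 0) ^ 2 + (y - ![(1:ℝ),0,0] 1) ^ 2
              + (z - ![(1:ℝ),0,0] 2) ^ 2 = _
            norm_num [hx, hy, Matrix.cons_val_two]
            rw [← hs]; ring
    · have hsne : s ≠ 0 := ne_of_gt hs
      have hmem : (WithLp.toLp 2 ![x / s, y / s, 0] : EuclideanSpace ℝ (Fin 3)) ∈ unitCircle3 := by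
        refine ⟨?_, rfl⟩
        show (x / s) ^ 2 + (y / s) ^ 2 = 1
        field_simp
        linarith [hs2]
      calc Metric.infDist p unitCircle3 ≤ dist p (WithLp.toLp 2 ![x / s, y / s, 0] : EuclideanSpace ℝ (Fin 3)) :=
            Metric.infDist_le_dist_of_mem hmem
        _ = Real.sqrt ((s - 1) ^ 2 + z ^ 2) := by
            rw [EuclideanSpace.dist_eq]
            congr 1
            rw [Fin.sum_univ_three]
            simp only [Real.dist_eq, sq_abs]
            show (x - ![x / s, y / s, (0:ℝ)] 0) ^ 2 + (y - ![x / s, y / s, (0:ℝ)] 1) ^ 2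
              + (z - ![x / s, y / s, (0:ℝ)] 2) ^ 2 = _
            norm_num [Matrix.cons_val_two]
            field_simp
            nlinarith [hs2]
  · rw [← not_lt]
    intro h
    rw [Metric.infDist_lt_iff hne] at h
    obtain ⟨q, hq, hlt⟩ := h
    exact absurd (key q hq) (not_le.mpr hlt)

lemma annulus_area (w : ℝ) (hw : 0 ≤ w) (hw1 : w ≤ 1) :
    volume {v : EuclideanSpace ℝ (Fin 2) | (‖v‖ - 1) ^ 2 ≤ w ^ 2}
      = ENNReal.ofReal (4 * π * w) := by
  have hset : {v : EuclideanSpace ℝ (Fin 2) | (‖v‖ - 1) ^ 2 ≤ w ^ 2}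
      = Metric.closedBall 0 (1 + w) \ Metric.ball 0 (1 - w) := by
    ext v
    simp only [Set.mem_setOf_eq, Set.mem_diff, Metric.mem_closedBall, Metric.mem_ball,
      dist_zero_right, not_lt]
    constructor
    · intro h; constructor <;> nlinarith
    · rintro ⟨h1, h2⟩; nlinarith
  have hsub : Metric.ball (0 : EuclideanSpace ℝ (Fin 2)) (1 - w)
      ⊆ Metric.closedBall 0 (1 + w) :=
    Metric.ball_subset_closedBall.trans (Metric.closedBall_subset_closedBall (by linarith))
  have hcb : volume (Metric.closedBall (0 : EuclideanSpace ℝ (Fin 2)) (1 + w))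
      = ENNReal.ofReal (π * (1 + w) ^ 2) := by
    rw [EuclideanSpace.volume_closedBall]
    simp only [Fintype.card_fin]
    rw [show ((2:ℕ):ℝ) / 2 + 1 = 2 by norm_num, Real.Gamma_two,
      Real.sq_sqrt Real.pi_pos.le]
    rw [← ENNReal.ofReal_pow (by linarith), ← ENNReal.ofReal_mul (by positivity)]
    ring_nf
  have hb : volume (Metric.ball (0 : EuclideanSpace ℝ (Fin 2)) (1 - w))
      = ENNReal.ofReal (π * (1 - w) ^ 2) := by
    have h : (0:ℝ) ≤ 1 - w := by linarith
    rw [EuclideanSpace.volume_ball]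
    simp only [Fintype.card_fin]
    rw [show ((2:ℕ):ℝ) / 2 + 1 = 2 by norm_num, Real.Gamma_two,
      Real.sq_sqrt Real.pi_pos.le]
    rw [← ENNReal.ofReal_pow h, ← ENNReal.ofReal_mul (by positivity)]
    ring_nf
  rw [hset, measure_diff hsub measurableSet_ball.nullMeasurableSet
    (by rw [hb]; exact ENNReal.ofReal_ne_top), hcb, hb,
    ← ENNReal.ofReal_sub _ (by positivity)]
  congr 1
  ring

/-- The volume of the solid torus ("bialy") of tube radius 1 around a unit circle
in `ℝ³` equals `2π²`. -/
theorem volume_bialy :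
    volume {p : EuclideanSpace ℝ (Fin 3) | Metric.infDist p unitCircle3 ≤ 1}
      = ENNReal.ofReal (2 * π ^ 2) := by
  -- Step 0: rewrite the set via the explicit distance formula
  have hset : {p : EuclideanSpace ℝ (Fin 3) | Metric.infDist p unitCircle3 ≤ 1}
      = {p : EuclideanSpace ℝ (Fin 3) |
          (Real.sqrt ((p 0) ^ 2 + (p 1) ^ 2) - 1) ^ 2 + (p 2) ^ 2 ≤ 1} := by
    ext p
    simp only [Set.mem_setOf_eq, infDist_unitCircle3]
    constructor
    · intro h
      have := Real.sq_sqrt (show (0:ℝ) ≤ (Real.sqrt ((p 0)^2 + (p 1)^2) - 1)^2 + (p 2)^2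
        by positivity)
      nlinarith [Real.sqrt_nonneg ((Real.sqrt ((p 0)^2 + (p 1)^2) - 1)^2 + (p 2)^2)]
    · intro h
      calc Real.sqrt ((Real.sqrt ((p 0)^2 + (p 1)^2) - 1)^2 + (p 2)^2)
          ≤ Real.sqrt 1 := Real.sqrt_le_sqrt h
        _ = 1 := Real.sqrt_one
  rw [hset]
  -- Step 1: transfer to the pi space `Fin 3 → ℝ`
  set T : Set (Fin 3 → ℝ) :=
    {f | (Real.sqrt ((f 0) ^ 2 + (f 1) ^ 2) - 1) ^ 2 + (f 2) ^ 2 ≤ 1} with hT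
  have hTm : MeasurableSet T := by
    apply measurableSet_le _ measurable_const
    fun_prop
  have h1 : volume {p : EuclideanSpace ℝ (Fin 3) |
      (Real.sqrt ((p 0) ^ 2 + (p 1) ^ 2) - 1) ^ 2 + (p 2) ^ 2 ≤ 1} = volume T := by
    rw [← (EuclideanSpace.volume_preserving_symm_measurableEquiv_toLp (Fin 3)).measure_preimage
      hTm.nullMeasurableSet]
    rfl
  rw [h1]
  -- Step 2: transfer to `ℝ × (Fin 2 → ℝ)`
  set U : Set (ℝ × (Fin 2 → ℝ)) :=
    {q | (Real.sqrt ((q.2 0) ^ 2 + (q.2 1) ^ 2) - 1) ^ 2 + q.1 ^ 2 ≤ 1} with hU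
  have hUm : MeasurableSet U := by
    apply measurableSet_le _ measurable_const
    fun_prop
  have h2 : volume T = volume U := by
    rw [← (MeasureTheory.volume_preserving_piFinSuccAbove (fun _ : Fin 3 => ℝ)
      2).measure_preimage hUm.nullMeasurableSet]
    congr 1
  rw [h2]
  -- Step 3: Fubini
  have h3 : volume U = ∫⁻ z : ℝ, volume {v : Fin 2 → ℝ |
      (Real.sqrt ((v 0) ^ 2 + (v 1) ^ 2) - 1) ^ 2 + z ^ 2 ≤ 1} := by
    rw [MeasureTheory.Measure.volume_eq_prod, MeasureTheory.Measure.prod_apply hUm]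
    rfl
  rw [h3]
  -- Step 4: compute each slice
  have h4 : ∀ z : ℝ, volume {v : Fin 2 → ℝ |
      (Real.sqrt ((v 0) ^ 2 + (v 1) ^ 2) - 1) ^ 2 + z ^ 2 ≤ 1}
      = ENNReal.ofReal (4 * π * Real.sqrt (1 - z ^ 2)) := by
    intro z
    have hE : volume {v : Fin 2 → ℝ |
        (Real.sqrt ((v 0) ^ 2 + (v 1) ^ 2) - 1) ^ 2 + z ^ 2 ≤ 1}
        = volume {v : EuclideanSpace ℝ (Fin 2) | (‖v‖ - 1) ^ 2 + z ^ 2 ≤ 1} := by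
      rw [← (EuclideanSpace.volume_preserving_symm_measurableEquiv_toLp (Fin 2)).measure_preimage
        (by apply measurableSet_le _ measurable_const; fun_prop :
          MeasurableSet {v : Fin 2 → ℝ |
            (Real.sqrt ((v 0) ^ 2 + (v 1) ^ 2) - 1) ^ 2 + z ^ 2 ≤ 1}).nullMeasurableSet]
      congr 1
      ext v
      simp only [Set.mem_preimage, Set.mem_setOf_eq, EuclideanSpace.norm_eq,
        Fin.sum_univ_two, Real.norm_eq_abs, sq_abs]
      rfl
    rw [hE]
    rcases le_or_gt (z ^ 2) 1 with hz | hz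
    · have hw : Real.sqrt (1 - z ^ 2) ^ 2 = 1 - z ^ 2 := Real.sq_sqrt (by linarith)
      have : {v : EuclideanSpace ℝ (Fin 2) | (‖v‖ - 1) ^ 2 + z ^ 2 ≤ 1}
          = {v : EuclideanSpace ℝ (Fin 2) | (‖v‖ - 1) ^ 2 ≤ Real.sqrt (1 - z ^ 2) ^ 2} := by
        ext v; simp only [Set.mem_setOf_eq, hw]; constructor <;> intro <;> linarith
      rw [this, annulus_area _ (Real.sqrt_nonneg _)]
      calc Real.sqrt (1 - z ^ 2) ≤ Real.sqrt 1 := Real.sqrt_le_sqrt (by nlinarith)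
        _ = 1 := Real.sqrt_one
    · have : {v : EuclideanSpace ℝ (Fin 2) | (‖v‖ - 1) ^ 2 + z ^ 2 ≤ 1} = ∅ := by
        ext v; simp only [Set.mem_setOf_eq, Set.mem_empty_iff_false, iff_false, not_le]
        nlinarith [sq_nonneg (‖v‖ - 1)]
      rw [this, measure_empty, Real.sqrt_eq_zero'.mpr (by linarith), mul_zero,
        ENNReal.ofReal_zero]
  simp_rw [h4]
  -- Step 5: evaluate the integral
  have hf_cont : Continuous fun z : ℝ => 4 * π * Real.sqrt (1 - z ^ 2) :=
    continuous_const.mul (Real.continuous_sqrt.comp (continuous_const.sub (continuous_pow 2)))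
  have hf_supp : HasCompactSupport fun z : ℝ => 4 * π * Real.sqrt (1 - z ^ 2) := by
    apply HasCompactSupport.intro (isCompact_Icc (a := (-1:ℝ)) (b := 1))
    intro x hx
    simp only [Set.mem_Icc, not_and_or, not_le] at hx
    have : (1 : ℝ) - x ^ 2 ≤ 0 := by rcases hx with h | h <;> nlinarith
    rw [Real.sqrt_eq_zero'.mpr this, mul_zero]
  have hint : Integrable (fun z : ℝ => 4 * π * Real.sqrt (1 - z ^ 2)) :=
    hf_cont.integrable_of_hasCompactSupport hf_supp
  rw [← MeasureTheory.ofReal_integral_eq_lintegral_ofReal hint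
    (Filter.Eventually.of_forall fun z => by positivity)]
  congr 1
  have hsupp : ∀ x ∉ Set.Ioc (-1:ℝ) 1, 4 * π * Real.sqrt (1 - x ^ 2) = 0 := by
    intro x hx
    simp only [Set.mem_Ioc, not_and_or, not_lt, not_le] at hx
    have : (1 : ℝ) - x ^ 2 ≤ 0 := by rcases hx with h | h <;> nlinarith
    rw [Real.sqrt_eq_zero'.mpr this, mul_zero]
  rw [← MeasureTheory.setIntegral_eq_integral_of_forall_compl_eq_zero hsupp,
    ← intervalIntegral.integral_of_le (by norm_num : (-1:ℝ) ≤ 1)]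
  rw [intervalIntegral.integral_const_mul, integral_sqrt_one_sub_sq]
  ring
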